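/- Let ℓ ≥ 0, k = 2ℓ+1. For integers 0 ≤ A_1 ≤ A_2, the set of Laurent polynomials u(t) over C with all terms of degree at most -A_1-1, such that w := -t^{A_2}u lies in C[[t]] and t^{A_1-A_2}(t^{2ℓ+1} - w²) lies in C[[t]], is nonempty if and only if A_2 - A_1 ≤ 2ℓ+1, in which case it is parameterized by polynomials w with nonzero terms only in degrees j satisfying ⌈(A_2-A_1)/2⌉ ≤ j ≤ A_2-1, i.e. it is an affine space of dimension ⌊(A_2-A_1)/2⌋ when A_2-A_1 ≤ 2ℓ+1 (with the convention that degree range may be empty). -/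

import Mathlib

open HahnSeries Finset

private lemma shift_coeff (a : ℤ) (u : LaurentSeries ℂ) (m : ℤ) :
    (HahnSeries.single a (1:ℂ) * u).coeff m = u.coeff (m - a) := by
  have h := HahnSeries.coeff_single_mul_add (r := (1:ℂ)) (x := u) (a := m - a) (b := a)
  rw [sub_add_cancel] at h
  simpa using h

private lemma mul_coeff_lt (x y : LaurentSeries ℂ) (v w m : ℤ)
    (hx : ∀ i, x.coeff i ≠ 0 → v ≤ i) (hy : ∀ j, y.coeff j ≠ 0 → w ≤ j)
    (hm : m < v + w) : (x * y).coeff m = 0 := by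
  rw [HahnSeries.coeff_mul]
  apply Finset.sum_eq_zero
  rintro ⟨i, j⟩ hij
  rw [Finset.mem_addAntidiagonal] at hij
  obtain ⟨hi, hj, hsum⟩ := hij
  rw [HahnSeries.mem_support] at hi hj
  have h1 := hx i hi
  have h2 := hy j hj
  exact absurd hsum (by omega)

private lemma mul_coeff_eq (x y : LaurentSeries ℂ) (v w : ℤ)
    (hx : ∀ i, x.coeff i ≠ 0 → v ≤ i) (hy : ∀ j, y.coeff j ≠ 0 → w ≤ j) :
    (x * y).coeff (v + w) = x.coeff v * y.coeff w := by
  rw [HahnSeries.coeff_mul]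
  rw [Finset.sum_eq_single ((v, w) : ℤ × ℤ)]
  · rintro ⟨i, j⟩ hij hne
    rw [Finset.mem_addAntidiagonal] at hij
    obtain ⟨hi, hj, hsum⟩ := hij
    rw [HahnSeries.mem_support] at hi hj
    have h1 := hx i hi
    have h2 := hy j hj
    have hiv : i = v := by omega
    have hjw : j = w := by omega
    exact absurd (Prod.ext hiv hjw) hne
  · intro h
    by_cases hv : x.coeff v = 0
    · rw [hv, zero_mul]
    by_cases hw : y.coeff w = 0
    · rw [hw, mul_zero]
    exact absurd (Finset.mem_addAntidiagonal.mpr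
      ⟨(HahnSeries.mem_support _ _).2 hv, (HahnSeries.mem_support _ _).2 hw, rfl⟩) h

/-- Schubert cells of the Hilbert scheme of `x² = t^(2ℓ+1)`.
For `0 ≤ A₁ ≤ A₂`, consider the set `S` of Laurent polynomials `u` (modelled as finitely
supported Laurent series) whose terms all have degree `≤ -A₁-1`, such that
`w := -t^(A₂) u ∈ ℂ[[t]]` and `t^(A₁-A₂)(t^(2ℓ+1) - w²) ∈ ℂ[[t]]`.  Then `S` is nonempty
iff `A₂ - A₁ ≤ 2ℓ+1`, and in that case `u ↦ w` is a bijection of `S` onto the set of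
polynomials `w` with nonzero terms only in degrees `j` with
`⌈(A₂-A₁)/2⌉ ≤ j` (i.e. `A₂-A₁ ≤ 2j`) and `j ≤ A₂-A₁-1`; in particular `S` is an affine
space of dimension `⌊(A₂-A₁)/2⌋`. -/
theorem stmt13 (ℓ : ℕ) (A₁ A₂ : ℤ) (h1 : 0 ≤ A₁) (h2 : A₁ ≤ A₂) :
    (({u : LaurentSeries ℂ | u.support.Finite ∧
        (∀ m : ℤ, u.coeff m ≠ 0 → m ≤ -A₁ - 1) ∧
        (∀ m : ℤ, m < 0 → (-(HahnSeries.single A₂ (1 : ℂ) * u)).coeff m = 0) ∧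
        (∀ m : ℤ, m < A₂ - A₁ →
          (HahnSeries.single ((2 * ℓ + 1 : ℕ) : ℤ) (1 : ℂ) -
            (-(HahnSeries.single A₂ (1 : ℂ) * u)) ^ 2).coeff m = 0)} : Set (LaurentSeries ℂ)).Nonempty
      ↔ A₂ - A₁ ≤ 2 * ℓ + 1) ∧
    (A₂ - A₁ ≤ 2 * ℓ + 1 →
      Set.BijOn (fun u : LaurentSeries ℂ => -(HahnSeries.single A₂ (1 : ℂ) * u))
        {u : LaurentSeries ℂ | u.support.Finite ∧
          (∀ m : ℤ, u.coeff m ≠ 0 → m ≤ -A₁ - 1) ∧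
          (∀ m : ℤ, m < 0 → (-(HahnSeries.single A₂ (1 : ℂ) * u)).coeff m = 0) ∧
          (∀ m : ℤ, m < A₂ - A₁ →
            (HahnSeries.single ((2 * ℓ + 1 : ℕ) : ℤ) (1 : ℂ) -
              (-(HahnSeries.single A₂ (1 : ℂ) * u)) ^ 2).coeff m = 0)}
        {w : LaurentSeries ℂ |
          ∀ m : ℤ, w.coeff m ≠ 0 → A₂ - A₁ ≤ 2 * m ∧ m ≤ A₂ - A₁ - 1}) := by
  set k : ℤ := ((2 * ℓ + 1 : ℕ) : ℤ) with hk
  have hkval : k = 2 * (ℓ : ℤ) + 1 := by push_cast [hk]; ring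
  -- coeff of w := -(single A₂ 1 * u)
  have wcoeff : ∀ (u : LaurentSeries ℂ) (m : ℤ),
      (-(HahnSeries.single A₂ (1 : ℂ) * u)).coeff m = -u.coeff (m - A₂) := by
    intro u m
    rw [HahnSeries.coeff_neg, shift_coeff]
  -- forward key lemma
  have key : ∀ u : LaurentSeries ℂ,
      u ∈ {u : LaurentSeries ℂ | u.support.Finite ∧
        (∀ m : ℤ, u.coeff m ≠ 0 → m ≤ -A₁ - 1) ∧
        (∀ m : ℤ, m < 0 → (-(HahnSeries.single A₂ (1 : ℂ) * u)).coeff m = 0) ∧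
        (∀ m : ℤ, m < A₂ - A₁ →
          (HahnSeries.single k (1 : ℂ) -
            (-(HahnSeries.single A₂ (1 : ℂ) * u)) ^ 2).coeff m = 0)} →
      ∀ m : ℤ, (-(HahnSeries.single A₂ (1 : ℂ) * u)).coeff m ≠ 0 →
        A₂ - A₁ ≤ 2 * m ∧ m ≤ A₂ - A₁ - 1 := by
    rintro u ⟨_, hu2, _, hu4⟩ m hm
    set w : LaurentSeries ℂ := -(HahnSeries.single A₂ (1 : ℂ) * u) with hw
    constructor
    · by_contra hlt
      push_neg at hlt
      have hwne : w ≠ 0 := fun h => hm (by rw [h]; simp)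
      set v : ℤ := w.order with hv
      have hvle : v ≤ m := HahnSeries.order_le_of_coeff_ne_zero hm
      have h2v : 2 * v < A₂ - A₁ := by omega
      have hmin : ∀ i, w.coeff i ≠ 0 → v ≤ i := fun i hi =>
        HahnSeries.order_le_of_coeff_ne_zero hi
      have hsq : (w ^ 2).coeff (v + v) = w.coeff v * w.coeff v := by
        rw [pow_two]; exact mul_coeff_eq w w v v hmin hmin
      have hcond := hu4 (v + v) (by omega)
      rw [HahnSeries.coeff_sub, hsq] at hcond
      have hne : v + v ≠ k := by omega
      rw [HahnSeries.coeff_single_of_ne hne] at hcond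
      have : w.coeff w.order ≠ 0 := HahnSeries.coeff_order_eq_zero.not.mpr hwne
      rw [← hv] at this
      refine this ?_
      have hz : w.coeff v * w.coeff v = 0 := by rwa [zero_sub, neg_eq_zero] at hcond
      exact (mul_self_eq_zero).1 hz
    · have : u.coeff (m - A₂) ≠ 0 := by
        intro h; apply hm; rw [wcoeff, h, neg_zero]
      have := hu2 _ this
      omega
  have hc2 : ∀ u : LaurentSeries ℂ,
      (∀ m : ℤ, (-(HahnSeries.single A₂ (1 : ℂ) * u)).coeff m ≠ 0 →
        A₂ - A₁ ≤ 2 * m ∧ m ≤ A₂ - A₁ - 1) →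
      ∀ m : ℤ, m < A₂ - A₁ →
        ((-(HahnSeries.single A₂ (1 : ℂ) * u)) ^ 2).coeff m = 0 := by
    intro u hb m hm
    set w : LaurentSeries ℂ := -(HahnSeries.single A₂ (1 : ℂ) * u)
    set c : ℤ := (A₂ - A₁ + 1) / 2 with hc
    have hbd : ∀ i, w.coeff i ≠ 0 → c ≤ i := by
      intro i hi
      have := (hb i hi).1
      omega
    rw [pow_two]
    exact mul_coeff_lt w w c c m hbd hbd (by omega)
  constructor
  · constructor
    · rintro ⟨u, hu⟩
      by_contra hgt
      push_neg at hgt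
      have hcond := hu.2.2.2 k (by omega)
      rw [HahnSeries.coeff_sub, HahnSeries.coeff_single_same,
        hc2 u (key u hu) k (by omega)] at hcond
      norm_num at hcond
    · intro hle
      refine ⟨0, ?_, ?_, ?_, ?_⟩
      · have : Function.support ((0:LaurentSeries ℂ).coeff) = ∅ := by ext m; simp
        rw [HahnSeries.support, this]; exact Set.finite_empty
      · intro m hm; simp at hm
      · intro m hm; simp
      · intro m hm
        have hmk : m ≠ k := by omega
        simp [HahnSeries.coeff_single_of_ne hmk]
  · intro hle
    refine ⟨?_, ?_, ?_⟩
    · intro u hu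
      exact key u hu
    · intro u₁ hu₁ u₂ hu₂ heq
      have : HahnSeries.single A₂ (1 : ℂ) * u₁ = HahnSeries.single A₂ (1 : ℂ) * u₂ :=
        neg_inj.1 heq
      ext m
      have h := congrArg (fun x : LaurentSeries ℂ => x.coeff (m + A₂)) this
      simpa [shift_coeff] using h
    · intro w hw
      simp only [Set.mem_setOf_eq] at hw
      set u : LaurentSeries ℂ := -(HahnSeries.single (-A₂) (1 : ℂ) * w) with hu
      have hucoeff : ∀ m : ℤ, u.coeff m = -w.coeff (m + A₂) := by
        intro m
        rw [hu, HahnSeries.coeff_neg, shift_coeff, sub_neg_eq_add]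
      have hEq : -(HahnSeries.single A₂ (1 : ℂ) * u) = w := by
        ext m
        rw [wcoeff, hucoeff, neg_neg, sub_add_cancel]
      have hwb : ∀ m : ℤ, w.coeff m ≠ 0 → A₂ - A₁ ≤ 2 * m ∧ m ≤ A₂ - A₁ - 1 := hw
      refine ⟨u, ⟨?_, ?_, ?_, ?_⟩, hEq⟩
      · apply Set.Finite.subset (Set.finite_Icc ((A₂ - A₁) / 2 - A₂ - 1) (-A₁ - 1))
        intro m hm
        rw [HahnSeries.mem_support, hucoeff, neg_ne_zero] at hm
        have := hwb _ hm
        simp only [Set.mem_Icc]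
        omega
      · intro m hm
        rw [hucoeff, neg_ne_zero] at hm
        have := hwb _ hm
        omega
      · intro m hm
        rw [hEq]
        by_contra h
        have := hwb m h
        omega
      · intro m hm
        rw [hEq, HahnSeries.coeff_sub]
        have hmk : m ≠ k := by omega
        rw [HahnSeries.coeff_single_of_ne hmk]
        have : (w ^ 2).coeff m = 0 := by
          set c : ℤ := (A₂ - A₁ + 1) / 2 with hc
          have hbd : ∀ i, w.coeff i ≠ 0 → c ≤ i := by
            intro i hi
            have := (hwb i hi).1
            omega
          rw [pow_two]
          exact mul_coeff_lt w w c c m hbd hbd (by omega)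
        rw [this, sub_zero]
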